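/- A positive semidefinite real 2n-form F(z₁,…,z_d) is a sum of squares of real forms of degree n if and only if F admits a positive semidefinite Gram matrix, i.e. there exists a real symmetric positive semidefinite M×M matrix A (indexed by the monomials z^{α₁},…,z^{α_M} of degree n) with F(z) = ∑_{i,j} A_{ij} z^{α_i} z^{α_j}. -/

import Mathlib

open MvPolynomial

/-- The monomial `z^α` associated to an exponent function `α : Fin d → ℕ`. -/
noncomputable def monOf {d : ℕ} (α : Fin d → ℕ) : MvPolynomial (Fin d) ℝ :=
  MvPolynomial.monomial (Finsupp.equivFunOnFinite.symm α) (1 : ℝ)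

open Matrix

lemma degree_symm {d : ℕ} (α : Fin d → ℕ) :
    (Finsupp.equivFunOnFinite.symm α : Fin d →₀ ℕ).degree = ∑ i, α i := by
  rw [Finsupp.degree_apply]
  rw [Finset.sum_subset (Finset.subset_univ _)]
  · rfl
  · intro x _ hx
    simpa using Finsupp.notMem_support_iff.mp hx

lemma monOf_homog {d n : ℕ} {α : Fin d → ℕ}
    (hα : α ∈ Finset.Nat.antidiagonalTuple d n) : (monOf α).IsHomogeneous n := by
  apply isHomogeneous_monomial
  rw [degree_symm]
  exact Finset.Nat.mem_antidiagonalTuple.mp hα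

lemma homog_decomp {d n : ℕ} {p : MvPolynomial (Fin d) ℝ} (hp : p.IsHomogeneous n) :
    p = ∑ α : {α : Fin d → ℕ // α ∈ Finset.Nat.antidiagonalTuple d n},
        C (coeff (Finsupp.equivFunOnFinite.symm α.1) p) * monOf α.1 := by
  classical
  set s := Finset.Nat.antidiagonalTuple d n with hs
  have hinj : Set.InjOn (fun α : Fin d → ℕ => (Finsupp.equivFunOnFinite.symm α : Fin d →₀ ℕ)) s :=
    fun a _ b _ h => Finsupp.equivFunOnFinite.symm.injective h
  have hsub : p.support ⊆ s.image (fun α => (Finsupp.equivFunOnFinite.symm α : Fin d →₀ ℕ)) := by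
    intro m hm
    have hdeg : m.degree = n := by
      by_contra hne
      exact (MvPolynomial.mem_support_iff.mp hm) (hp.coeff_eq_zero hne)
    refine Finset.mem_image.mpr ⟨Finsupp.equivFunOnFinite m, ?_, by simp⟩
    rw [hs, Finset.Nat.mem_antidiagonalTuple]
    have := degree_symm (d := d) (Finsupp.equivFunOnFinite m)
    simp only [Equiv.symm_apply_apply] at this
    rw [← this, hdeg]
  calc p = ∑ m ∈ p.support, monomial m (coeff m p) := p.as_sum
    _ = ∑ m ∈ s.image (fun α => (Finsupp.equivFunOnFinite.symm α : Fin d →₀ ℕ)),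
          monomial m (coeff m p) := by
        refine Finset.sum_subset hsub fun m _ hm => ?_
        rw [MvPolynomial.notMem_support_iff.mp hm, monomial_zero]
    _ = ∑ α ∈ s, monomial (Finsupp.equivFunOnFinite.symm α)
          (coeff (Finsupp.equivFunOnFinite.symm α) p) := Finset.sum_image hinj
    _ = ∑ α ∈ s, C (coeff (Finsupp.equivFunOnFinite.symm α) p) * monOf α := by
        simp [monOf, C_mul_monomial]
    _ = _ := (Finset.sum_coe_sort s _).symm

lemma gram_expand {d n : ℕ} {ι : Type*} [Fintype ι]
    (B : ι → {α : Fin d → ℕ // α ∈ Finset.Nat.antidiagonalTuple d n} → ℝ) :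
    ∑ t : ι, (∑ α : {α : Fin d → ℕ // α ∈ Finset.Nat.antidiagonalTuple d n},
        C (B t α) * monOf α.1) ^ 2 =
    ∑ i : {α : Fin d → ℕ // α ∈ Finset.Nat.antidiagonalTuple d n},
      ∑ j : {α : Fin d → ℕ // α ∈ Finset.Nat.antidiagonalTuple d n},
        C (∑ t : ι, B t i * B t j) * monOf i.1 * monOf j.1 := by
  have h1 : ∀ t : ι, (∑ α : {α : Fin d → ℕ // α ∈ Finset.Nat.antidiagonalTuple d n},
      C (B t α) * monOf α.1) ^ 2 =
      ∑ i : {α : Fin d → ℕ // α ∈ Finset.Nat.antidiagonalTuple d n},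
        ∑ j : {α : Fin d → ℕ // α ∈ Finset.Nat.antidiagonalTuple d n},
          C (B t i * B t j) * monOf i.1 * monOf j.1 := by
    intro t
    rw [sq, Finset.sum_mul_sum]
    refine Finset.sum_congr rfl fun i _ => Finset.sum_congr rfl fun j _ => ?_
    rw [_root_.map_mul]; ring
  calc ∑ t : ι, (∑ α : {α : Fin d → ℕ // α ∈ Finset.Nat.antidiagonalTuple d n},
        C (B t α) * monOf α.1) ^ 2
      = ∑ t : ι, ∑ i : {α : Fin d → ℕ // α ∈ Finset.Nat.antidiagonalTuple d n},
          ∑ j : {α : Fin d → ℕ // α ∈ Finset.Nat.antidiagonalTuple d n},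
            C (B t i * B t j) * monOf i.1 * monOf j.1 := by
        exact Finset.sum_congr rfl fun t _ => h1 t
    _ = ∑ i : {α : Fin d → ℕ // α ∈ Finset.Nat.antidiagonalTuple d n},
          ∑ t : ι, ∑ j : {α : Fin d → ℕ // α ∈ Finset.Nat.antidiagonalTuple d n},
            C (B t i * B t j) * monOf i.1 * monOf j.1 := Finset.sum_comm
    _ = ∑ i : {α : Fin d → ℕ // α ∈ Finset.Nat.antidiagonalTuple d n},
          ∑ j : {α : Fin d → ℕ // α ∈ Finset.Nat.antidiagonalTuple d n},
            ∑ t : ι, C (B t i * B t j) * monOf i.1 * monOf j.1 :=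
        Finset.sum_congr rfl fun i _ => Finset.sum_comm
    _ = _ := by
        refine Finset.sum_congr rfl fun i _ => Finset.sum_congr rfl fun j _ => ?_
        rw [map_sum, Finset.sum_mul, Finset.sum_mul]

theorem sos_iff_psd_gram
    {d n : ℕ} (F : MvPolynomial (Fin d) ℝ)
    (hFhom : F.IsHomogeneous (2 * n))
    (hFpsd : ∀ x : Fin d → ℝ, 0 ≤ eval x F) :
    (∃ (k : ℕ) (h : Fin k → MvPolynomial (Fin d) ℝ),
        (∀ i, (h i).IsHomogeneous n) ∧ F = ∑ i, (h i) ^ 2) ↔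
    (∃ A : Matrix {α : Fin d → ℕ // α ∈ Finset.Nat.antidiagonalTuple d n}
             {α : Fin d → ℕ // α ∈ Finset.Nat.antidiagonalTuple d n} ℝ,
        A.PosSemidef ∧
        F = ∑ i : {α : Fin d → ℕ // α ∈ Finset.Nat.antidiagonalTuple d n},
              ∑ j : {α : Fin d → ℕ // α ∈ Finset.Nat.antidiagonalTuple d n},
                C (A i j) * monOf i.1 * monOf j.1) := by
  constructor
  · rintro ⟨k, h, hhom, rfl⟩
    set B : Matrix (Fin k) {α : Fin d → ℕ // α ∈ Finset.Nat.antidiagonalTuple d n} ℝ :=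
      fun t α => coeff (Finsupp.equivFunOnFinite.symm α.1) (h t) with hB
    refine ⟨Bᴴ * B, Matrix.posSemidef_conjTranspose_mul_self B, ?_⟩
    have hentry : ∀ i j, (Bᴴ * B) i j = ∑ t : Fin k, B t i * B t j := by
      intro i j
      simp [Matrix.mul_apply, Matrix.conjTranspose_apply]
    calc ∑ t : Fin k, h t ^ 2
        = ∑ t : Fin k, (∑ α : {α : Fin d → ℕ // α ∈ Finset.Nat.antidiagonalTuple d n},
            C (B t α) * monOf α.1) ^ 2 := by
          refine Finset.sum_congr rfl fun t _ => ?_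
          rw [← homog_decomp (hhom t)]
      _ = _ := by
          rw [gram_expand]
          exact Finset.sum_congr rfl fun i _ => Finset.sum_congr rfl fun j _ => by
            rw [hentry]
  · rintro ⟨A, hA, rfl⟩
    obtain ⟨B, hB⟩ : ∃ B : Matrix {α : Fin d → ℕ // α ∈ Finset.Nat.antidiagonalTuple d n}
        {α : Fin d → ℕ // α ∈ Finset.Nat.antidiagonalTuple d n} ℝ, A = Bᴴ * B := by
      classical
      open scoped MatrixOrder Norms.L2Operator in
      exact CStarAlgebra.nonneg_iff_eq_star_mul_self.mp hA.nonneg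
    subst hB
    refine ⟨Fintype.card {α : Fin d → ℕ // α ∈ Finset.Nat.antidiagonalTuple d n},
      fun i => ∑ j : {α : Fin d → ℕ // α ∈ Finset.Nat.antidiagonalTuple d n},
        C (B ((Fintype.equivFin _).symm i) j) * monOf j.1, ?_, ?_⟩
    · intro i
      refine IsHomogeneous.sum _ _ _ fun j _ => ?_
      simpa using (isHomogeneous_C _ _).mul (monOf_homog j.2)
    · rw [Equiv.sum_comp (Fintype.equivFin _).symm
        (fun t : {α : Fin d → ℕ // α ∈ Finset.Nat.antidiagonalTuple d n} =>
          (∑ j : {α : Fin d → ℕ // α ∈ Finset.Nat.antidiagonalTuple d n},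
            C (B t j) * monOf j.1) ^ 2), gram_expand (B := B)]
      refine Finset.sum_congr rfl fun i _ => Finset.sum_congr rfl fun j _ => ?_
      congr 2
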